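/- Suppose S < T and U < V are proper inclusions of finite groups, S is a normal subgroup of T, and T/S is cyclic of prime order p. Then S × U ≤ T × V admits a diagonal group if and only if there exist subgroups N and R of V with U ≤ N ≤ R ≤ V, N normal in R, and R/N cyclic of order p. In particular, if p does not divide the index [V : U], then no diagonal group exists. -/

import Mathlib

/-- `G` is a *diagonal* subgroup for the pair `S × U ≤ T × V`:
it lies between `S × U` and `T × V = ⊤`, does not contain `T × U`
and is not contained in `S × V`. -/
def IsDiagonal {T V : Type*} [Group T] [Group V]
    (S : Subgroup T) (U : Subgroup V) (G : Subgroup (T × V)) : Prop :=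
  S.prod U ≤ G ∧ ¬ ((⊤ : Subgroup T).prod U ≤ G) ∧ ¬ (G ≤ S.prod (⊤ : Subgroup V))

/-- There are subgroups `U ≤ N ≤ R ≤ V` with `N` normal in `R` and `R/N` cyclic of order `p`. -/
def HasCyclicStep {V : Type*} [Group V] (U : Subgroup V) (p : ℕ) : Prop :=
  ∃ N R : Subgroup V, U ≤ N ∧ N ≤ R ∧ ∃ hn : (N.subgroupOf R).Normal,
    letI := hn
    IsCyclic (↥R ⧸ N.subgroupOf R) ∧ Nat.card (↥R ⧸ N.subgroupOf R) = p

theorem max_of_prime_index {T : Type*} [Group T] [Finite T] {S K : Subgroup T} {p : ℕ}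
    (hp : p.Prime) (hSK : S ≤ K) (hidx : S.index = p) : K = S ∨ K = ⊤ := by
  have h := Subgroup.relIndex_mul_index hSK
  rw [hidx] at h
  rcases (Nat.Prime.eq_one_or_self_of_dvd hp _ (Dvd.intro_left _ h)) with h1 | h1
  · right; exact Subgroup.index_eq_one.mp h1
  · left
    have hrel : S.relIndex K = 1 := by
      rw [h1] at h
      have hp0 : 0 < p := hp.pos
      nlinarith [Nat.one_le_iff_ne_zero.mpr (fun h0 => by simp [h0] at h; omega : S.relIndex K ≠ 0)]
    exact le_antisymm (Subgroup.relIndex_eq_one.mp hrel) hSK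

-- Forward direction
theorem diag_to_step {T V : Type*} [Group T] [Group V] [Finite T] [Finite V]
    (S : Subgroup T) (U : Subgroup V) (hS : S < ⊤)
    (hSn : S.Normal) (p : ℕ) (hp : p.Prime)
    (hcyc : IsCyclic (T ⧸ S)) (hcard : Nat.card (T ⧸ S) = p) (G : Subgroup (T × V)) (hG : IsDiagonal S U G) :
    HasCyclicStep U p := by
  obtain ⟨hle, hnc, hns⟩ := hG
  have hidx : S.index = p := by rwa [Subgroup.index] at *
  -- A0 = S
  have hA0 : G.comap (MonoidHom.inl T V) = S := by
    have hSle : S ≤ G.comap (MonoidHom.inl T V) := fun s hs =>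
      hle (show ((s, 1) : T × V) ∈ S.prod U from ⟨hs, U.one_mem⟩)
    rcases max_of_prime_index hp hSle hidx with h | h
    · exact h
    · exfalso
      apply hnc
      rintro ⟨t, u⟩ ⟨-, hu⟩
      have h1 : ((t, 1) : T × V) ∈ G := by
        have : t ∈ G.comap (MonoidHom.inl T V) := h ▸ Subgroup.mem_top t
        exact this
      have h2 : ((1, u) : T × V) ∈ G := hle ⟨S.one_mem, hu⟩
      have : ((t, 1) : T × V) * (1, u) ∈ G := G.mul_mem h1 h2
      simpa using this
  -- A = ⊤
  have hA : G.map (MonoidHom.fst T V) = ⊤ := by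
    have hSle : S ≤ G.map (MonoidHom.fst T V) := fun s hs =>
      ⟨(s, 1), hle ⟨hs, U.one_mem⟩, rfl⟩
    rcases max_of_prime_index hp hSle hidx with h | h
    · exfalso
      apply hns
      rintro ⟨t, v⟩ hx
      refine ⟨?_, Subgroup.mem_top _⟩
      have : t ∈ G.map (MonoidHom.fst T V) := ⟨(t, v), hx, rfl⟩
      exact h ▸ this
    · exact h
  set R := G.map (MonoidHom.snd T V) with hR
  set N := G.comap (MonoidHom.inr T V) with hN
  have hUN : U ≤ N := fun u hu => show ((1, u) : T × V) ∈ G from hle ⟨S.one_mem, hu⟩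
  have hNR : N ≤ R := fun v hv => ⟨(1, v), hv, rfl⟩
  -- hom from G to R
  have hmemR : ∀ x : ↥G, (x : T × V).2 ∈ R := fun x => ⟨x, x.2, rfl⟩
  let f : ↥G →* ↥R := ((MonoidHom.snd T V).comp G.subtype).codRestrict R hmemR
  have hfsurj : Function.Surjective f := by
    rintro ⟨r, hr⟩
    obtain ⟨g, hg, hgr⟩ := hr
    exact ⟨⟨g, hg⟩, Subtype.ext hgr⟩
  let φ : ↥G →* T ⧸ S := (QuotientGroup.mk' S).comp ((MonoidHom.fst T V).comp G.subtype)
  have hker : f.ker ≤ φ.ker := by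
    intro x hx
    have hx2 : (x : T × V).2 = 1 := congrArg Subtype.val hx
    have h1 : (x : T × V).1 ∈ S := by
      rw [← hA0]
      show ((x : T × V).1, (1 : V)) ∈ G
      rw [← hx2]
      exact x.2
    exact (QuotientGroup.eq_one_iff _).mpr h1
  let ψ : ↥R →* T ⧸ S :=
    f.liftOfRightInverse (Function.surjInv hfsurj) (Function.rightInverse_surjInv hfsurj)
      ⟨φ, hker⟩
  have hψf : ∀ x : ↥G, ψ (f x) = φ x := fun x =>
    f.liftOfRightInverse_comp_apply _ (Function.rightInverse_surjInv hfsurj) ⟨φ, hker⟩ x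
  have hψsurj : Function.Surjective ψ := by
    intro q
    obtain ⟨t, rfl⟩ := QuotientGroup.mk_surjective q
    have : t ∈ G.map (MonoidHom.fst T V) := hA ▸ Subgroup.mem_top t
    obtain ⟨g, hg, hgt⟩ := this
    exact ⟨f ⟨g, hg⟩, (hψf ⟨g, hg⟩).trans (congrArg _ hgt)⟩
  have hkerψ : ψ.ker = N.subgroupOf R := by
    ext r
    obtain ⟨x, rfl⟩ := hfsurj r
    constructor
    · intro h
      have h1 : (x : T × V).1 ∈ S := (QuotientGroup.eq_one_iff _).mp ((hψf x).symm.trans h)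
      have h2 : (((x : T × V).1, 1) : T × V) ∈ G := hle ⟨h1, U.one_mem⟩
      have : (((x : T × V).1, 1) : T × V)⁻¹ * x ∈ G := G.mul_mem (G.inv_mem h2) x.2
      have : ((1, (x : T × V).2) : T × V) ∈ G := by
        convert this using 1
        ext <;> simp
      exact this
    · intro h
      have h1 : ((1, (x : T × V).2) : T × V) ∈ G := h
      have h2 : (((x : T × V).1, 1) : T × V) ∈ G := by
        have : (x : T × V) * ((1, (x : T × V).2) : T × V)⁻¹ ∈ G := G.mul_mem x.2 (G.inv_mem h1)
        convert this using 1
        ext <;> simp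
      have h3 : (x : T × V).1 ∈ S := by
        rw [← hA0]; exact h2
      show ψ (f x) = 1
      rw [hψf]
      exact (QuotientGroup.eq_one_iff _).mpr h3
  have hn : (N.subgroupOf R).Normal := by rw [← hkerψ]; exact ψ.normal_ker
  haveI := hn
  have e : (↥R ⧸ N.subgroupOf R) ≃* T ⧸ S :=
    (QuotientGroup.quotientMulEquivOfEq hkerψ.symm).trans
      (QuotientGroup.quotientKerEquivOfSurjective ψ hψsurj)
  exact ⟨N, R, hUN, hNR, hn, isCyclic_of_surjective e.symm e.symm.surjective,
    by rw [Nat.card_congr e.toEquiv, hcard]⟩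

-- Backward direction
theorem step_to_diag {T V : Type*} [Group T] [Group V] [Finite T] [Finite V]
    (S : Subgroup T) (U : Subgroup V) (hS : S < ⊤)
    (hSn : S.Normal) (p : ℕ) (hp : p.Prime)
    (hcard : Nat.card (T ⧸ S) = p) (h : HasCyclicStep U p) :
    ∃ G : Subgroup (T × V), IsDiagonal S U G := by
  obtain ⟨N, R, hUN, hNR, hn, hcyc', hc⟩ := h
  haveI := hn
  haveI : Fact p.Prime := ⟨hp⟩
  let e : (T ⧸ S) ≃* (↥R ⧸ N.subgroupOf R) := mulEquivOfPrimeCardEq hcard hc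
  let G : Subgroup (T × V) :=
  { carrier := {x | ∃ h : x.2 ∈ R, e (QuotientGroup.mk x.1) = QuotientGroup.mk ⟨x.2, h⟩}
    one_mem' := ⟨R.one_mem, by simp; rfl⟩
    mul_mem' := by
      rintro a b ⟨ha, hea⟩ ⟨hb, heb⟩
      refine ⟨R.mul_mem ha hb, ?_⟩
      have h1 : e (QuotientGroup.mk ((a * b).1)) = e (QuotientGroup.mk a.1) *
          e (QuotientGroup.mk b.1) := by
        rw [show ((a * b).1 : T) = a.1 * b.1 from rfl, QuotientGroup.mk_mul, map_mul]
      rw [h1, hea, heb, ← QuotientGroup.mk_mul]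
      exact congrArg QuotientGroup.mk (Subtype.ext rfl)
    inv_mem' := by
      rintro a ⟨ha, hea⟩
      refine ⟨R.inv_mem ha, ?_⟩
      have h1 : e (QuotientGroup.mk ((a⁻¹).1)) = (e (QuotientGroup.mk a.1))⁻¹ := by
        rw [show ((a⁻¹).1 : T) = a.1⁻¹ from rfl, QuotientGroup.mk_inv, map_inv]
      rw [h1, hea, ← QuotientGroup.mk_inv]
      exact congrArg QuotientGroup.mk (Subtype.ext rfl) }
  have hmemG : ∀ x : T × V, x ∈ G ↔
      ∃ h : x.2 ∈ R, e (QuotientGroup.mk x.1) = QuotientGroup.mk ⟨x.2, h⟩ := fun _ => Iff.rfl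
  refine ⟨G, ?_, ?_, ?_⟩
  · rintro ⟨s, u⟩ ⟨hs, hu⟩
    refine ⟨hNR (hUN hu), ?_⟩
    have h1 : (QuotientGroup.mk s : T ⧸ S) = 1 := (QuotientGroup.eq_one_iff s).mpr hs
    have h2 : (QuotientGroup.mk (⟨u, hNR (hUN hu)⟩ : ↥R) : ↥R ⧸ N.subgroupOf R) = 1 :=
      (QuotientGroup.eq_one_iff _).mpr (hUN hu)
    rw [h1, h2, map_one]
  · intro hc2
    obtain ⟨t, -, ht⟩ := SetLike.exists_of_lt hS
    have : ((t, 1) : T × V) ∈ G := hc2 ⟨Subgroup.mem_top t, U.one_mem⟩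
    obtain ⟨h1, he⟩ := this
    have h2 : (QuotientGroup.mk (⟨(1 : V), h1⟩ : ↥R) : ↥R ⧸ N.subgroupOf R) = 1 :=
      (QuotientGroup.eq_one_iff _).mpr (N.one_mem)
    rw [h2] at he
    have : (QuotientGroup.mk t : T ⧸ S) = 1 := by
      apply e.injective; rw [he, map_one]
    exact ht ((QuotientGroup.eq_one_iff t).mp this)
  · intro hc3
    obtain ⟨t, -, ht⟩ := SetLike.exists_of_lt hS
    obtain ⟨r, hr⟩ := QuotientGroup.mk_surjective (e (QuotientGroup.mk t))
    have : ((t, (r : V)) : T × V) ∈ G := ⟨r.2, by rw [← hr]⟩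
    exact ht (hc3 this).1

theorem step_dvd_index {V : Type*} [Group V] [Finite V] {U : Subgroup V} {p : ℕ}
    (h : HasCyclicStep U p) : p ∣ U.index := by
  obtain ⟨N, R, hUN, hNR, hn, -, hc⟩ := h
  have h1 : N.relIndex R = p := by
    rw [Subgroup.relIndex, Subgroup.index]; exact hc
  calc p = N.relIndex R := h1.symm
    _ ∣ U.relIndex R := Subgroup.relIndex_dvd_of_le_left R hUN
    _ ∣ U.index := Subgroup.relIndex_dvd_index_of_le (hUN.trans hNR)

theorem normal_prime_index_diagonal_iff {T V : Type*} [Group T] [Group V] [Finite T] [Finite V]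
    (S : Subgroup T) (U : Subgroup V) (hS : S < ⊤) (hU : U < ⊤)
    (hSn : S.Normal) (p : ℕ) (hp : p.Prime)
    (hcyc : IsCyclic (T ⧸ S)) (hcard : Nat.card (T ⧸ S) = p) :
    ((∃ G : Subgroup (T × V), IsDiagonal S U G) ↔ HasCyclicStep U p) ∧
    (¬ (p ∣ U.index) → ∀ G : Subgroup (T × V), ¬ IsDiagonal S U G) := by
  constructor
  · constructor
    · rintro ⟨G, hG⟩
      exact diag_to_step S U hS hSn p hp hcyc hcard G hG
    · exact step_to_diag S U hS hSn p hp hcard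
  · intro hnd G hG
    exact hnd (step_dvd_index (diag_to_step S U hS hSn p hp hcyc hcard G hG))
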